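/- Let u ~ N(ū, Σ_u) be a Gaussian random vector on ℝ^{N_u} with N_u ∈ {1, 2} and Σ_u positive definite, let u_max > 0, and let ρ = √(λ_max(Σ_u)). If ‖ū‖₂ ≤ u_max, then 1 − P(‖u‖₂ ≤ u_max) ≤ exp(−(1/2)·((‖ū‖₂ − u_max)/ρ)²). -/

import Mathlib

open MeasureTheory ProbabilityTheory Matrix Real

noncomputable def mvGaussian {d : ℕ} (m : Fin d → ℝ) (S : Matrix (Fin d) (Fin d) ℝ)
    (hS : S.PosDef) : Measure (Fin d → ℝ) :=
  (Measure.pi fun _ : Fin d => gaussianReal 0 1).map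
    (fun z => m + (hS.posSemidef.1.eigenvectorUnitary.1 *
      diagonal ((√·) ∘ hS.posSemidef.1.eigenvalues) *
      (star hS.posSemidef.1.eigenvectorUnitary : Matrix (Fin d) (Fin d) ℝ)).mulVec z)

noncomputable def stdNormalCDF (x : ℝ) : ℝ := cdf (gaussianReal 0 1) x

noncomputable def stdNormalQuantile (p : ℝ) : ℝ := Function.invFun stdNormalCDF p

noncomputable def chiSqCDF (d : ℕ) (x : ℝ) : ℝ := cdf (gammaMeasure (d / 2) (1 / 2)) x

noncomputable def chiSqQuantile (d : ℕ) (p : ℝ) : ℝ := Function.invFun (chiSqCDF d) p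

noncomputable def PsiInv (d : ℕ) (β : ℝ) : ℝ := Real.sqrt (chiSqQuantile d (1 - β))

noncomputable def Psi (d : ℕ) (r : ℝ) : ℝ := 1 - chiSqCDF d (r ^ 2)

noncomputable def lambdaMax {d : ℕ} (S : Matrix (Fin d) (Fin d) ℝ) (hS : S.IsHermitian) : ℝ :=
  ⨆ i, hS.eigenvalues i

noncomputable def regIncBeta (a b x : ℝ) : ℝ :=
  (∫ t in (0:ℝ)..x, t ^ (a - 1) * (1 - t) ^ (b - 1)) /
    (∫ t in (0:ℝ)..1, t ^ (a - 1) * (1 - t) ^ (b - 1))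

noncomputable def calI (d : ℕ) (x : ℝ) : ℝ :=
  regIncBeta ((d - 1 : ℝ) / 2) (1 / 2) (Real.sqrt (1 - x))

section Aux
open Set

noncomputable def sqrtM {d : ℕ} (S : Matrix (Fin d) (Fin d) ℝ) (hS : S.PosDef) :
    Matrix (Fin d) (Fin d) ℝ :=
  hS.posSemidef.1.eigenvectorUnitary.1 *
      diagonal ((√·) ∘ hS.posSemidef.1.eigenvalues) *
      (star hS.posSemidef.1.eigenvectorUnitary : Matrix (Fin d) (Fin d) ℝ)

lemma sqrtM_isHermitian {d : ℕ} (S : Matrix (Fin d) (Fin d) ℝ) (hS : S.PosDef) :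
    (sqrtM S hS).IsHermitian := by
  unfold sqrtM
  rw [IsHermitian, conjTranspose_mul, conjTranspose_mul, diagonal_conjTranspose,
    ← Matrix.star_eq_conjTranspose, star_star, ← Matrix.star_eq_conjTranspose]
  simp [Matrix.mul_assoc]

lemma sqrtM_mul_self {d : ℕ} (S : Matrix (Fin d) (Fin d) ℝ) (hS : S.PosDef) :
    sqrtM S hS * sqrtM S hS = S := by
  unfold sqrtM
  set U := hS.posSemidef.1.eigenvectorUnitary with hU
  have hUU : (star U : Matrix (Fin d) (Fin d) ℝ) * U.1 = 1 := by
    exact (Matrix.mem_unitaryGroup_iff').mp U.2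
  rw [show U.1 * diagonal ((√·) ∘ hS.posSemidef.1.eigenvalues) * (star U : Matrix (Fin d) (Fin d) ℝ)
      * (U.1 * diagonal ((√·) ∘ hS.posSemidef.1.eigenvalues) * (star U : Matrix (Fin d) (Fin d) ℝ))
      = U.1 * (diagonal ((√·) ∘ hS.posSemidef.1.eigenvalues) * ((star U : Matrix (Fin d) (Fin d) ℝ)
      * U.1) * diagonal ((√·) ∘ hS.posSemidef.1.eigenvalues)) * (star U : Matrix (Fin d) (Fin d) ℝ)
      by simp only [Matrix.mul_assoc], hUU, Matrix.mul_one, diagonal_mul_diagonal]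
  conv_rhs => rw [hS.posSemidef.1.spectral_theorem, Unitary.conjStarAlgAut_apply]
  congr 2
  congr 1
  funext i
  simp [Real.mul_self_sqrt (hS.posSemidef.eigenvalues_nonneg i)]

lemma gauss2_prod :
    (gaussianReal 0 1).prod (gaussianReal 0 1)
      = (volume : Measure (ℝ × ℝ)).withDensity
          (fun p => gaussianPDF 0 1 p.1 * gaussianPDF 0 1 p.2) := by
  refine Measure.prod_eq fun s t hs ht => ?_
  rw [withDensity_apply _ (hs.prod ht), Measure.volume_eq_prod, ← Measure.prod_restrict,
    lintegral_prod_mul ((measurable_gaussianPDF 0 1).aemeasurable)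
      ((measurable_gaussianPDF 0 1).aemeasurable),
    gaussianReal_of_var_ne_zero 0 one_ne_zero, withDensity_apply _ hs, withDensity_apply _ ht]

lemma hasDerivAt_negexp (x : ℝ) :
    HasDerivAt (fun r : ℝ => -Real.exp (-r ^ 2 / 2)) (x * Real.exp (-x ^ 2 / 2)) x := by
  have h1 : HasDerivAt (fun r : ℝ => -r ^ 2 / 2) (-x) x := by
    have := ((hasDerivAt_pow 2 x).neg.div_const 2)
    exact this.congr_deriv (by norm_num; ring)
  have := (h1.exp).neg
  exact this.congr_deriv (by ring)

lemma integrableOn_tail (s : ℝ) :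
    IntegrableOn (fun r : ℝ => r * Real.exp (-r ^ 2 / 2)) (Ioi s) := by
  have := (integrable_mul_exp_neg_mul_sq (by norm_num : (0:ℝ) < 1/2)).integrableOn (s := Ioi s)
  convert this using 2 with r
  ring_nf

lemma tail_integral (s : ℝ) :
    ∫ r in Ioi s, r * Real.exp (-r ^ 2 / 2) = Real.exp (-s ^ 2 / 2) := by
  have h := integral_Ioi_of_hasDerivAt_of_tendsto
    (f := fun r : ℝ => -Real.exp (-r ^ 2 / 2)) (f' := fun r => r * Real.exp (-r ^ 2 / 2))
    (a := s) (m := 0) (Continuous.continuousWithinAt (by continuity))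
    (fun x _ => hasDerivAt_negexp x) (integrableOn_tail s) ?_
  · rw [h]; ring
  · have : Filter.Tendsto (fun r : ℝ => Real.exp (-r ^ 2 / 2)) Filter.atTop (nhds 0) := by
      apply Real.tendsto_exp_atBot.comp
      apply Filter.Tendsto.atBot_div_const (by norm_num)
      exact Filter.tendsto_neg_atBot_iff.mpr (Filter.tendsto_pow_atTop (by norm_num))
    simpa using this.neg


lemma measurableSet_S (s : ℝ) : MeasurableSet {p : ℝ × ℝ | s ≤ Real.sqrt (p.1^2 + p.2^2)} := by
  have : Continuous fun p : ℝ × ℝ => Real.sqrt (p.1^2 + p.2^2) := by continuity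
  exact this.measurable measurableSet_Ici

lemma phi_eq (x : ℝ) :
    gaussianPDFReal 0 1 x = (Real.sqrt (2 * π))⁻¹ * Real.exp (-x^2/2) := by
  simp [gaussianPDFReal_def]

lemma phi_mul_phi (a b : ℝ) :
    gaussianPDFReal 0 1 a * gaussianPDFReal 0 1 b
      = (2 * π)⁻¹ * Real.exp (-(a^2 + b^2) / 2) := by
  rw [phi_eq, phi_eq]
  have h1 : (Real.sqrt (2 * π))⁻¹ * (Real.sqrt (2 * π))⁻¹ = (2 * π)⁻¹ := by
    rw [← mul_inv, Real.mul_self_sqrt (by positivity)]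
  calc (Real.sqrt (2 * π))⁻¹ * rexp (-a ^ 2 / 2) * ((Real.sqrt (2 * π))⁻¹ * rexp (-b ^ 2 / 2))
      = (Real.sqrt (2 * π))⁻¹ * (Real.sqrt (2 * π))⁻¹ * (rexp (-a ^ 2 / 2) * rexp (-b ^ 2 / 2)) := by
        ring
    _ = (2 * π)⁻¹ * Real.exp (-(a^2 + b^2) / 2) := by
        rw [h1, ← Real.exp_add]; ring_nf

lemma gauss2_tail {s : ℝ} (hs : 0 ≤ s) :
    ((gaussianReal 0 1).prod (gaussianReal 0 1)) {p : ℝ × ℝ | s ≤ Real.sqrt (p.1^2 + p.2^2)}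
      = ENNReal.ofReal (Real.exp (-s^2/2)) := by
  have hS := measurableSet_S s
  rw [gauss2_prod, withDensity_apply _ hS]
  have hint : IntegrableOn (fun p : ℝ × ℝ => gaussianPDFReal 0 1 p.1 * gaussianPDFReal 0 1 p.2)
      {p : ℝ × ℝ | s ≤ Real.sqrt (p.1^2 + p.2^2)} volume := by
    rw [Measure.volume_eq_prod]
    exact ((integrable_gaussianPDFReal 0 1).mul_prod (integrable_gaussianPDFReal 0 1)).integrableOn
  have hnn : 0 ≤ᶠ[ae (volume.restrict {p : ℝ × ℝ | s ≤ Real.sqrt (p.1^2 + p.2^2)})]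
      fun p : ℝ × ℝ => gaussianPDFReal 0 1 p.1 * gaussianPDFReal 0 1 p.2 :=
    Filter.Eventually.of_forall fun p =>
      mul_nonneg (gaussianPDFReal_nonneg _ _ _) (gaussianPDFReal_nonneg _ _ _)
  have key : ∫⁻ p in {p : ℝ × ℝ | s ≤ Real.sqrt (p.1^2 + p.2^2)},
        gaussianPDF 0 1 p.1 * gaussianPDF 0 1 p.2
      = ENNReal.ofReal (∫ p in {p : ℝ × ℝ | s ≤ Real.sqrt (p.1^2 + p.2^2)},
          gaussianPDFReal 0 1 p.1 * gaussianPDFReal 0 1 p.2) := by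
    rw [ofReal_integral_eq_lintegral_ofReal hint hnn]
    refine lintegral_congr fun p => ?_
    simp only [gaussianPDF_def]
    rw [← ENNReal.ofReal_mul (gaussianPDFReal_nonneg _ _ _)]
  rw [key]
  congr 1
  rw [← integral_indicator hS, ← integral_comp_polarCoord_symm]
  have heq : ∀ p ∈ polarCoord.target,
      p.1 • (Set.indicator {p : ℝ × ℝ | s ≤ Real.sqrt (p.1^2 + p.2^2)}
        (fun q : ℝ × ℝ => gaussianPDFReal 0 1 q.1 * gaussianPDFReal 0 1 q.2)
        (polarCoord.symm p))
      = ((Ici s).indicator (fun r => r * ((2 * π)⁻¹ * Real.exp (-r^2/2))) p.1) * 1 := by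
    rintro ⟨r, θ⟩ hp
    rw [polarCoord_target] at hp
    obtain ⟨hr, hθ⟩ := hp
    simp only [polarCoord_symm_apply]
    have hsq : (r * Real.cos θ)^2 + (r * Real.sin θ)^2 = r^2 := by
      have := Real.sin_sq_add_cos_sq θ; nlinarith [this]
    have hmem : ((r * Real.cos θ, r * Real.sin θ) ∈
        {p : ℝ × ℝ | s ≤ Real.sqrt (p.1^2 + p.2^2)}) ↔ r ∈ Ici s := by
      simp only [mem_setOf_eq, mem_Ici]
      rw [hsq, Real.sqrt_sq (le_of_lt hr)]
    by_cases h : r ∈ Ici s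
    · rw [indicator_of_mem (hmem.mpr h), indicator_of_mem h, phi_mul_phi, hsq,
        smul_eq_mul, mul_one]
    · rw [indicator_of_notMem (fun hc => h (hmem.mp hc)), indicator_of_notMem h]
      simp
  rw [setIntegral_congr_fun polarCoord.open_target.measurableSet heq, polarCoord_target,
    Measure.volume_eq_prod,
    setIntegral_prod_mul (f := fun r : ℝ => (Ici s).indicator
      (fun r => r * ((2 * π)⁻¹ * Real.exp (-r^2/2))) r) (g := fun _ : ℝ => (1:ℝ))]
  have hIoo : ∫ (_ : ℝ) in Ioo (-π) π, (1:ℝ) = 2 * π := by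
    simp [Real.volume_Ioo]
    rw [max_eq_left (by positivity)]
    ring
  have hIci : ∫ r in Ioi (0:ℝ), (Ici s).indicator (fun r => r * ((2 * π)⁻¹ * Real.exp (-r^2/2))) r
      = (2 * π)⁻¹ * Real.exp (-s^2/2) := by
    rw [setIntegral_indicator measurableSet_Ici]
    have hset : ∫ r in Ioi (0:ℝ) ∩ Ici s, (fun r => r * ((2 * π)⁻¹ * Real.exp (-r^2/2))) r
        = ∫ r in Ioi s, (fun r => r * ((2 * π)⁻¹ * Real.exp (-r^2/2))) r := by
      rcases eq_or_lt_of_le hs with h0 | h0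
      · rw [inter_eq_left.mpr (by rw [← h0]; exact Ioi_subset_Ici_self), ← h0]
      · have hic : Ioi (0:ℝ) ∩ Ici s = Ici s :=
          inter_eq_right.mpr fun x hx => lt_of_lt_of_le h0 hx
        rw [hic]
        exact setIntegral_congr_set (Ioi_ae_eq_Ici (a := s)).symm
    rw [hset]
    have hrw : ∀ r : ℝ, r * ((2 * π)⁻¹ * Real.exp (-r^2/2))
        = (2 * π)⁻¹ * (r * Real.exp (-r^2/2)) := fun r => by ring
    simp_rw [hrw]
    rw [integral_const_mul, tail_integral]
  rw [hIci, hIoo]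
  field_simp


lemma gauss1_tail {s : ℝ} (hs : 0 ≤ s) :
    (gaussianReal 0 1) {x : ℝ | s ≤ |x|} ≤ ENNReal.ofReal (Real.exp (-s^2/2)) := by
  set A : Set ℝ := {x : ℝ | s ≤ |x|} with hA
  have hAm : MeasurableSet A := by
    have : Continuous fun x : ℝ => |x| := continuous_abs
    exact this.measurable measurableSet_Ici
  have hsub : A ×ˢ A ⊆ {p : ℝ × ℝ | Real.sqrt 2 * s ≤ Real.sqrt (p.1^2 + p.2^2)} := by
    rintro ⟨x, y⟩ ⟨hx, hy⟩
    simp only [hA, mem_setOf_eq] at hx hy ⊢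
    have hx2 : s^2 ≤ x^2 := by rw [← sq_abs x]; exact pow_le_pow_left₀ hs hx 2
    have hy2 : s^2 ≤ y^2 := by rw [← sq_abs y]; exact pow_le_pow_left₀ hs hy 2
    have h1 : Real.sqrt 2 * s = Real.sqrt (2 * s^2) := by
      rw [Real.sqrt_mul (by norm_num), Real.sqrt_sq hs]
    rw [h1]
    exact Real.sqrt_le_sqrt (by linarith)
  have h2 := measure_mono (μ := (gaussianReal 0 1).prod (gaussianReal 0 1)) hsub
  rw [Measure.prod_prod, gauss2_tail (by positivity : (0:ℝ) ≤ Real.sqrt 2 * s)] at h2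
  have hexp : -(Real.sqrt 2 * s)^2/2 = -s^2 := by
    rw [mul_pow, Real.sq_sqrt (by norm_num : (0:ℝ) ≤ 2)]
    ring
  rw [hexp] at h2
  -- pass to reals
  have hfin : (gaussianReal 0 1) A ≠ ⊤ := measure_ne_top _ _
  set a : ℝ := ((gaussianReal 0 1) A).toReal with ha
  have ha0 : 0 ≤ a := ENNReal.toReal_nonneg
  have h3 : a * a ≤ Real.exp (-s^2) := by
    have := ENNReal.toReal_mono (by simp) h2
    rwa [ENNReal.toReal_mul, ENNReal.toReal_ofReal (Real.exp_nonneg _)] at this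
  have h4 : a ≤ Real.exp (-s^2/2) := by
    have hsq : a^2 ≤ (Real.exp (-s^2/2))^2 := by
      calc a^2 = a * a := sq a
        _ ≤ Real.exp (-s^2) := h3
        _ = (Real.exp (-s^2/2))^2 := by
            rw [← Real.exp_nat_mul]; ring_nf
    calc a = Real.sqrt (a^2) := (Real.sqrt_sq ha0).symm
      _ ≤ Real.sqrt ((Real.exp (-s^2/2))^2) := Real.sqrt_le_sqrt hsq
      _ = Real.exp (-s^2/2) := Real.sqrt_sq (Real.exp_nonneg _)
  calc (gaussianReal 0 1) A = ENNReal.ofReal a := by rw [ha, ENNReal.ofReal_toReal hfin]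
    _ ≤ ENNReal.ofReal (Real.exp (-s^2/2)) := ENNReal.ofReal_le_ofReal h4

lemma gaussPi_tail {Nu : ℕ} (hN : Nu = 1 ∨ Nu = 2) {s : ℝ} (hs : 0 ≤ s) :
    (Measure.pi fun _ : Fin Nu => gaussianReal 0 1) {z | s ≤ Real.sqrt (∑ i, z i ^ 2)}
      ≤ ENNReal.ofReal (Real.exp (-s^2/2)) := by
  rcases hN with hN | hN <;> subst hN
  · have hmp := measurePreserving_funUnique (gaussianReal 0 1) (Fin 1)
    have hTm : MeasurableSet {x : ℝ | s ≤ |x|} :=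
      continuous_abs.measurable measurableSet_Ici
    have hpre : (⇑(MeasurableEquiv.funUnique (Fin 1) ℝ)) ⁻¹' {x : ℝ | s ≤ |x|}
        = {z : Fin 1 → ℝ | s ≤ Real.sqrt (∑ i, z i ^ 2)} := by
      ext z
      simp [MeasurableEquiv.funUnique, Fin.sum_univ_one, Real.sqrt_sq_eq_abs]
    rw [← hpre]
    exact (hmp.measure_preimage_equiv _).le.trans (gauss1_tail hs)
  · have hmp := measurePreserving_piFinTwo (fun _ : Fin 2 => gaussianReal 0 1)
    have hTm : MeasurableSet {p : ℝ × ℝ | s ≤ Real.sqrt (p.1^2 + p.2^2)} := by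
      have : Continuous fun p : ℝ × ℝ => Real.sqrt (p.1^2 + p.2^2) := by continuity
      exact this.measurable measurableSet_Ici
    have hpre : (⇑(MeasurableEquiv.piFinTwo fun _ : Fin 2 => ℝ)) ⁻¹'
          {p : ℝ × ℝ | s ≤ Real.sqrt (p.1^2 + p.2^2)}
        = {z : Fin 2 → ℝ | s ≤ Real.sqrt (∑ i, z i ^ 2)} := by
      ext z
      simp [MeasurableEquiv.piFinTwo, Fin.sum_univ_two]
    rw [← hpre, hmp.measure_preimage hTm.nullMeasurableSet]
    exact le_of_eq (gauss2_tail hs)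


lemma dot_trans {n : ℕ} (U : Matrix (Fin n) (Fin n) ℝ) (x z : Fin n → ℝ) :
    z ⬝ᵥ (U *ᵥ x) = (Uᵀ *ᵥ z) ⬝ᵥ x := by
  rw [Matrix.dotProduct_mulVec, ← Matrix.mulVec_transpose]

lemma rayleigh_bound {n : ℕ} [Nonempty (Fin n)] (S : Matrix (Fin n) (Fin n) ℝ)
    (hS : S.IsHermitian) (z : Fin n → ℝ) :
    z ⬝ᵥ S *ᵥ z ≤ lambdaMax S hS * (z ⬝ᵥ z) := by
  set U : Matrix (Fin n) (Fin n) ℝ := (hS.eigenvectorUnitary : Matrix (Fin n) (Fin n) ℝ) with hU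
  have hstar : (star (hS.eigenvectorUnitary : Matrix (Fin n) (Fin n) ℝ)) = Uᵀ := by
    ext i j
    simp [Matrix.conjTranspose_apply, hU]
  set w : Fin n → ℝ := Uᵀ *ᵥ z with hw
  have hUU : U * Uᵀ = 1 := by
    rw [← hstar]
    exact (Matrix.mem_unitaryGroup_iff).mp (hS.eigenvectorUnitary).2
  have hzw : z ⬝ᵥ S *ᵥ z = w ⬝ᵥ (diagonal hS.eigenvalues *ᵥ w) := by
    conv_lhs => rw [hS.spectral_theorem, Unitary.conjStarAlgAut_apply]
    rw [hstar]
    have hof : (RCLike.ofReal ∘ hS.eigenvalues : Fin n → ℝ) = hS.eigenvalues := by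
      ext i; simp
    rw [hof, ← Matrix.mulVec_mulVec, ← Matrix.mulVec_mulVec, dot_trans, hw]
  have hww : w ⬝ᵥ w = z ⬝ᵥ z := by
    rw [hw, ← dot_trans, Matrix.mulVec_mulVec, hUU, Matrix.one_mulVec]
  have hL : ∀ i, hS.eigenvalues i ≤ lambdaMax S hS := fun i =>
    le_ciSup (Set.Finite.bddAbove (Set.finite_range _)) i
  rw [hzw, ← hww]
  simp only [Matrix.mulVec_diagonal, dotProduct]
  calc ∑ i, w i * (hS.eigenvalues i * w i)
      ≤ ∑ i, lambdaMax S hS * (w i * w i) := by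
        apply Finset.sum_le_sum
        intro i _
        have h1 : w i * (hS.eigenvalues i * w i) = hS.eigenvalues i * (w i * w i) := by ring
        rw [h1]
        exact mul_le_mul_of_nonneg_right (hL i) (mul_self_nonneg _)
    _ = lambdaMax S hS * ∑ i, w i * w i := by rw [Finset.mul_sum]

lemma lambdaMax_pos {n : ℕ} [Nonempty (Fin n)] (S : Matrix (Fin n) (Fin n) ℝ) (hS : S.PosDef) :
    0 < lambdaMax S hS.1 :=
  lt_of_lt_of_le (hS.eigenvalues_pos (Classical.arbitrary _))
    (le_ciSup (Set.Finite.bddAbove (Set.finite_range _)) _)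

lemma sqrt_mulVec_bound {n : ℕ} [Nonempty (Fin n)] (S : Matrix (Fin n) (Fin n) ℝ)
    (hS : S.PosDef) (z : Fin n → ℝ) :
    Real.sqrt (∑ i, (sqrtM S hS *ᵥ z) i ^ 2)
      ≤ Real.sqrt (lambdaMax S hS.1) * Real.sqrt (∑ i, z i ^ 2) := by
  set A := sqrtM S hS with hA
  have hAH : A.IsHermitian := sqrtM_isHermitian S hS
  have hAt : Aᵀ = A := by
    calc Aᵀ = Aᴴ := by ext i j; simp [Matrix.conjTranspose_apply]
      _ = A := hAH
  have hquad : ∑ i, (A *ᵥ z) i ^ 2 = z ⬝ᵥ S *ᵥ z := by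
    have h1 : ∑ i, (A *ᵥ z) i ^ 2 = (A *ᵥ z) ⬝ᵥ (A *ᵥ z) := by
      simp [dotProduct, pow_two]
    rw [h1, ← sqrtM_mul_self S hS, ← hA, ← Matrix.mulVec_mulVec, dot_trans, hAt]
    exact dotProduct_comm _ _
  have hzz : z ⬝ᵥ z = ∑ i, z i ^ 2 := by simp [dotProduct, pow_two]
  rw [hquad, ← Real.sqrt_mul (le_of_lt (lambdaMax_pos S hS)), ← hzz]
  exact Real.sqrt_le_sqrt (rayleigh_bound S hS.1 z)

lemma eucl_triangle {n : ℕ} (x y : Fin n → ℝ) :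
    Real.sqrt (∑ i, (x i + y i)^2) ≤ Real.sqrt (∑ i, x i^2) + Real.sqrt (∑ i, y i^2) := by
  have h := norm_add_le (E := EuclideanSpace ℝ (Fin n)) (WithLp.toLp 2 x) (WithLp.toLp 2 y)
  simpa [EuclideanSpace.norm_eq, Real.norm_eq_abs, sq_abs] using h

end Aux

section Aux2
open Set

end Aux2

theorem stmt19 {Nu : ℕ} (hN : Nu = 1 ∨ Nu = 2) (ubar : Fin Nu → ℝ)
    (Su : Matrix (Fin Nu) (Fin Nu) ℝ) (hSu : Su.PosDef) (umax : ℝ) (humax : 0 < umax)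
    (hm : Real.sqrt (∑ i, ubar i ^ 2) ≤ umax) :
    1 - ((mvGaussian ubar Su hSu) {v | Real.sqrt (∑ i, v i ^ 2) ≤ umax}).toReal
      ≤ Real.exp (-(1 / 2) * ((Real.sqrt (∑ i, ubar i ^ 2) - umax)
          / Real.sqrt (lambdaMax Su hSu.1)) ^ 2) := by
  have hne : Nonempty (Fin Nu) := by
    rcases hN with h | h <;> subst h <;> infer_instance
  set M := Real.sqrt (∑ i, ubar i ^ 2) with hM
  set ρ := Real.sqrt (lambdaMax Su hSu.1) with hρ
  have hρpos : 0 < ρ := Real.sqrt_pos.mpr (lambdaMax_pos Su hSu)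
  set t := (umax - M) / ρ with ht
  have ht0 : 0 ≤ t := div_nonneg (by linarith) hρpos.le
  -- measurability
  have hcont : Continuous fun v : Fin Nu → ℝ => Real.sqrt (∑ i, v i ^ 2) :=
    Real.continuous_sqrt.comp (continuous_finset_sum _ fun i _ => (continuous_apply i).pow 2)
  have hAset : MeasurableSet {v : Fin Nu → ℝ | Real.sqrt (∑ i, v i ^ 2) ≤ umax} :=
    hcont.measurable measurableSet_Iic
  set f : (Fin Nu → ℝ) → (Fin Nu → ℝ) := fun z => ubar + (sqrtM Su hSu).mulVec z with hf
  have hfc : Continuous f :=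
    continuous_const.add
      (show Continuous fun z : Fin Nu → ℝ => (sqrtM Su hSu).mulVec z from
        LinearMap.continuous_of_finiteDimensional ((sqrtM Su hSu).mulVecLin))
  have hprob : IsProbabilityMeasure (mvGaussian ubar Su hSu) := by
    unfold mvGaussian
    exact Measure.isProbabilityMeasure_map hfc.measurable.aemeasurable
  have hcompl : 1 - ((mvGaussian ubar Su hSu) {v | Real.sqrt (∑ i, v i ^ 2) ≤ umax}).toReal
      = ((mvGaussian ubar Su hSu) {v | Real.sqrt (∑ i, v i ^ 2) ≤ umax}ᶜ).toReal := by
    rw [prob_compl_eq_one_sub hAset, ENNReal.toReal_sub_of_le prob_le_one ENNReal.one_ne_top,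
      ENNReal.toReal_one]
  rw [hcompl]
  have hmap : (mvGaussian ubar Su hSu) {v | Real.sqrt (∑ i, v i ^ 2) ≤ umax}ᶜ
      = (Measure.pi fun _ : Fin Nu => gaussianReal 0 1)
          (f ⁻¹' {v | Real.sqrt (∑ i, v i ^ 2) ≤ umax}ᶜ) := by
    unfold mvGaussian
    exact Measure.map_apply hfc.measurable hAset.compl
  have hsub : f ⁻¹' {v | Real.sqrt (∑ i, v i ^ 2) ≤ umax}ᶜ
      ⊆ {z : Fin Nu → ℝ | t ≤ Real.sqrt (∑ i, z i ^ 2)} := by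
    intro z hz
    simp only [Set.mem_preimage, Set.mem_compl_iff, Set.mem_setOf_eq, not_le] at hz
    simp only [Set.mem_setOf_eq]
    have htri : Real.sqrt (∑ i, (f z) i ^ 2)
        ≤ M + Real.sqrt (∑ i, ((sqrtM Su hSu).mulVec z) i ^ 2) := by
      have := eucl_triangle ubar ((sqrtM Su hSu).mulVec z)
      simpa [hf, hM] using this
    have hb := sqrt_mulVec_bound Su hSu z
    have h2 : umax - M ≤ ρ * Real.sqrt (∑ i, z i ^ 2) := by
      have := lt_of_lt_of_le hz htri
      linarith [hb]
    rw [ht, div_le_iff₀ hρpos]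
    linarith [h2]
  have hbound := le_trans (le_of_eq hmap)
    (le_trans (measure_mono hsub) (gaussPi_tail hN ht0))
  have hexp : -(1/2) * ((M - umax) / ρ)^2 = -t^2/2 := by
    have h1 : (M - umax) / ρ = -t := by rw [ht]; ring
    rw [h1, neg_sq]; ring
  rw [hexp]
  calc ((mvGaussian ubar Su hSu) {v | Real.sqrt (∑ i, v i ^ 2) ≤ umax}ᶜ).toReal
      ≤ (ENNReal.ofReal (Real.exp (-t^2/2))).toReal :=
        ENNReal.toReal_mono ENNReal.ofReal_ne_top hbound
    _ = Real.exp (-t^2/2) := ENNReal.toReal_ofReal (Real.exp_nonneg _)
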